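/- arXiv:1007.5334 — 2 statements merged into one kernel-verified Lean document; each statement's English description precedes it below -/
import Mathlib

section
/- Let λ ⊆ μ be partitions such that s = μ/λ = {a_1, …, a_ℓ} is a string (a_1 topmost), and define the cells b_0, b_1, …, b_ℓ as in the context. Then the cells b_1, …, b_{ℓ−1} all lie in ∂λ \ ∂μ; b_0 lies in ∂λ \ ∂μ if and only if b_0 exists and h_λ(b_0) = k; b_ℓ lies in ∂λ \ ∂μ if and only if b_ℓ exists and h_λ(b_ℓ) = k; and ∂λ \ ∂μ contains no other cells. In particular ∂λ \ ∂μ equals {b_1,…,b_{ℓ−1}}, {b_0,b_1,…,b_{ℓ−1}}, {b_1,…,b_{ℓ−1},b_ℓ}, or {b_0,b_1,…,b_{ℓ−1},b_ℓ} according to whether h_λ(b_0) and h_λ(b_ℓ) are different from k or equal to k. -/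
open scoped Classical

/-! ## Basic objects: cells, partitions, hooks, `k`-boundary, `k`-shapes -/

abbrev Cell : Type := ℕ × ℕ

/-- A partition, encoded as a weakly decreasing, eventually zero function `ℕ → ℕ`
(rows are 0-indexed; a larger row index means a higher row, French convention). -/
def IsPartition (f : ℕ → ℕ) : Prop :=
  (∀ i j : ℕ, i ≤ j → f j ≤ f i) ∧ ∃ N : ℕ, ∀ i : ℕ, N ≤ i → f i = 0

/-- The cells of the Ferrers diagram of `f`: `(i, j)` with `j < f i` (0-indexed). -/
def cellsOf (f : ℕ → ℕ) : Set Cell := {p : Cell | p.2 < f p.1}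

/-- The conjugate: number of rows with at least `j + 1` cells. -/
noncomputable def conj (f : ℕ → ℕ) (j : ℕ) : ℕ := Nat.card {i : ℕ // j < f i}

/-- Hook length of the cell `p` of `f` (0-indexed version of
`(λ_i − j) + (λ^t_j − i) + 1`). -/
noncomputable def hook (f : ℕ → ℕ) (p : Cell) : ℕ :=
  (f p.1 - p.2) + (conj f p.2 - p.1) - 1

/-- The `k`-boundary: cells of `f` with hook length at most `k`. -/
def bdry (k : ℕ) (f : ℕ → ℕ) : Set Cell := {p : Cell | p ∈ cellsOf f ∧ hook f p ≤ k}

/-- `k`-row shape: the number of cells of the `k`-boundary in row `i`. -/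
noncomputable def rsK (k : ℕ) (f : ℕ → ℕ) (i : ℕ) : ℕ :=
  Nat.card {j : ℕ // (i, j) ∈ bdry k f}

/-- `k`-column shape: the number of cells of the `k`-boundary in column `j`. -/
noncomputable def csK (k : ℕ) (f : ℕ → ℕ) (j : ℕ) : ℕ :=
  Nat.card {i : ℕ // (i, j) ∈ bdry k f}

/-- A `k`-shape: a partition whose `k`-row shape and `k`-column shape are
weakly decreasing. -/
def IsKShape (k : ℕ) (f : ℕ → ℕ) : Prop :=
  IsPartition f ∧ (∀ i j : ℕ, i ≤ j → rsK k f j ≤ rsK k f i) ∧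
    ∀ i j : ℕ, i ≤ j → csK k f j ≤ csK k f i

/-- A `k`-core: a partition with no cell of hook length exactly `k`. -/
def IsKCore (k : ℕ) (f : ℕ → ℕ) : Prop :=
  IsPartition f ∧ ∀ p ∈ cellsOf f, hook f p ≠ k

/-! ## Strings and moves -/

/-- Diagonal index of a cell. -/
def diagIdx (p : Cell) : ℤ := (p.2 : ℤ) - (p.1 : ℤ)

/-- Two cells are contiguous when their diagonal indices differ by `k` or `k+1`. -/
def Contiguous (k : ℕ) (p q : Cell) : Prop :=
  (diagIdx p - diagIdx q).natAbs = k ∨ (diagIdx p - diagIdx q).natAbs = k + 1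

/-- `a` lists the cells of the skew shape `g / f` from top to bottom, with
successive cells contiguous and in strictly lower rows: a string. -/
def IsString (k : ℕ) (f g : ℕ → ℕ) (a : List Cell) : Prop :=
  IsPartition f ∧ IsPartition g ∧ (∀ i, f i ≤ g i) ∧ a ≠ [] ∧
    cellsOf g \ cellsOf f = {x : Cell | x ∈ a} ∧
    List.Chain' (fun x y : Cell => y.1 < x.1 ∧ Contiguous k x y) a

/-- `b` is the leftmost cell of the `k`-boundary of `f` in row `r`. -/
def IsLeftmostBdryInRow (k : ℕ) (f : ℕ → ℕ) (r : ℕ) (b : Cell) : Prop :=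
  b ∈ bdry k f ∧ b.1 = r ∧ ∀ c : ℕ, (r, c) ∈ bdry k f → b.2 ≤ c

/-- `b` is the bottom cell of the `k`-boundary of `f` in column `c`. -/
def IsBottomBdryInCol (k : ℕ) (f : ℕ → ℕ) (c : ℕ) (b : Cell) : Prop :=
  b ∈ bdry k f ∧ b.2 = c ∧ ∀ r : ℕ, (r, c) ∈ bdry k f → b.1 ≤ r

/-- The cell `b₀` (the leftmost boundary cell in the row of the top cell of the
string `a`) exists and has hook length exactly `k`. -/
def B0HookK (k : ℕ) (f : ℕ → ℕ) (a : List Cell) : Prop :=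
  ∃ h b : Cell, a.head? = some h ∧ IsLeftmostBdryInRow k f h.1 b ∧ hook f b = k

/-- The cell `b_ℓ` (the bottom boundary cell in the column of the bottom cell of
the string `a`) exists and has hook length exactly `k`. -/
def BlHookK (k : ℕ) (f : ℕ → ℕ) (a : List Cell) : Prop :=
  ∃ h b : Cell, a.getLast? = some h ∧ IsBottomBdryInCol k f h.2 b ∧ hook f b = k

def RowType (k : ℕ) (f : ℕ → ℕ) (a : List Cell) : Prop := B0HookK k f a ∧ ¬ BlHookK k f a

def ColType (k : ℕ) (f : ℕ → ℕ) (a : List Cell) : Prop := ¬ B0HookK k f a ∧ BlHookK k f a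

def CoverType (k : ℕ) (f : ℕ → ℕ) (a : List Cell) : Prop := ¬ B0HookK k f a ∧ ¬ BlHookK k f a

def CocoverType (k : ℕ) (f : ℕ → ℕ) (a : List Cell) : Prop := B0HookK k f a ∧ BlHookK k f a

/-- `k`-row shape extended to integer row indices (0 outside `ℕ`). -/
noncomputable def rsZ (k : ℕ) (f : ℕ → ℕ) (r : ℤ) : ℤ :=
  if 0 ≤ r then (rsK k f r.toNat : ℤ) else 0

/-- `k`-column shape extended to integer column indices (0 outside `ℕ`). -/
noncomputable def csZ (k : ℕ) (f : ℕ → ℕ) (c : ℤ) : ℤ :=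
  if 0 ≤ c then (csK k f c.toNat : ℤ) else 0

/-- The strings `a = g/f` and `b = g'/f'` are translates of each other: the
cells correspond under translation by a fixed vector `v`, the row/column shape
changes correspond under `v`, and corresponding modified rows/columns have the
same size. -/
def TranslateStrings (k : ℕ) (f g f' g' : ℕ → ℕ) (a b : List Cell) : Prop :=
  ∃ v : ℤ × ℤ, a.length = b.length ∧
    (∀ (i : ℕ) (x y : Cell), a[i]? = some x → b[i]? = some y →
      (y.1 : ℤ) = (x.1 : ℤ) + v.1 ∧ (y.2 : ℤ) = (x.2 : ℤ) + v.2) ∧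
    (∀ r : ℤ, rsZ k g r - rsZ k f r = rsZ k g' (r + v.1) - rsZ k f' (r + v.1) ∧
      (rsZ k g r ≠ rsZ k f r → rsZ k f r = rsZ k f' (r + v.1))) ∧
    (∀ c : ℤ, csZ k g c - csZ k f c = csZ k g' (c + v.2) - csZ k f' (c + v.2) ∧
      (csZ k g c ≠ csZ k f c → csZ k f c = csZ k f' (c + v.2)))

/-- The common data of a row or column move from `lam` to `mu`: a chain of
partitions `lam = shape 0 ⊂ shape 1 ⊂ ⋯ ⊂ shape rank = mu` whose successive
differences are strings of a common length that are translates of each other,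
with `lam` and `mu` both `k`-shapes. -/
structure PreMove (k : ℕ) (lam mu : ℕ → ℕ) where
  rank : ℕ
  len : ℕ
  rank_pos : 0 < rank
  len_pos : 0 < len
  shape : ℕ → ℕ → ℕ
  strs : ℕ → List Cell
  shape_zero : shape 0 = lam
  shape_rank : shape rank = mu
  src_kshape : IsKShape k lam
  tgt_kshape : IsKShape k mu
  isStr : ∀ i < rank, IsString k (shape i) (shape (i + 1)) (strs i)
  strLen : ∀ i < rank, (strs i).length = len
  translates : ∀ i < rank, ∀ j < rank,
    TranslateStrings k (shape i) (shape (i + 1)) (shape j) (shape (j + 1)) (strs i) (strs j)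

/-- A row move: all strings are row-type and their top cells occur in
consecutive columns from left to right. -/
def PreMove.IsRowMove {k : ℕ} {lam mu : ℕ → ℕ} (m : PreMove k lam mu) : Prop :=
  (∀ i < m.rank, RowType k (m.shape i) (m.strs i)) ∧
    ∀ i : ℕ, i + 1 < m.rank → ∀ x y : Cell,
      (m.strs i).head? = some x → (m.strs (i + 1)).head? = some y → y.2 = x.2 + 1

/-- A column move: all strings are column-type and their bottom cells occur in
consecutive rows from bottom to top. -/
def PreMove.IsColMove {k : ℕ} {lam mu : ℕ → ℕ} (m : PreMove k lam mu) : Prop :=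
  (∀ i < m.rank, ColType k (m.shape i) (m.strs i)) ∧
    ∀ i : ℕ, i + 1 < m.rank → ∀ x y : Cell,
      (m.strs i).getLast? = some x → (m.strs (i + 1)).getLast? = some y → y.1 = x.1 + 1

/-- A move is a row move or a column move. -/
def PreMove.IsMove {k : ℕ} {lam mu : ℕ → ℕ} (m : PreMove k lam mu) : Prop :=
  m.IsRowMove ∨ m.IsColMove

/-- There is a move from `lam` to `mu`. -/
def MoveRel (k : ℕ) (lam mu : ℕ → ℕ) : Prop := ∃ m : PreMove k lam mu, m.IsMove

/-- A `f`-addable corner: a cell outside `f` which together with `f` forms the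
diagram of a partition. -/
def IsAddableCorner (f : ℕ → ℕ) (x : Cell) : Prop :=
  x ∉ cellsOf f ∧ ∃ g : ℕ → ℕ, IsPartition g ∧ cellsOf g = cellsOf f ∪ {x}

/-! ## Strips -/

/-- The skew shape `g / f` has at most one cell in each column. -/
def OneCellPerCol (f g : ℕ → ℕ) : Prop :=
  ∀ x y : Cell, x ∈ cellsOf g \ cellsOf f → y ∈ cellsOf g \ cellsOf f → x.2 = y.2 → x = y

/-- The skew shape `g / f` has at most one cell in each row. -/
def OneCellPerRow (f g : ℕ → ℕ) : Prop :=
  ∀ x y : Cell, x ∈ cellsOf g \ cellsOf f → y ∈ cellsOf g \ cellsOf f → x.1 = y.1 → x = y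

/-- `mu / lam` is a strip of rank `r` of `k`-shapes: a horizontal strip such
that `rs(mu)/rs(lam)` is a horizontal strip and `cs(mu)/cs(lam)` is a vertical
strip, both of size `r`. -/
def IsStrip (k r : ℕ) (lam mu : ℕ → ℕ) : Prop :=
  IsKShape k lam ∧ IsKShape k mu ∧ (∀ i, lam i ≤ mu i) ∧ OneCellPerCol lam mu ∧
    (∀ i, rsK k lam i ≤ rsK k mu i) ∧ OneCellPerCol (rsK k lam) (rsK k mu) ∧
    (∀ j, csK k lam j ≤ csK k mu j) ∧ OneCellPerRow (csK k lam) (csK k mu) ∧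
    (∑ᶠ i : ℕ, (rsK k mu i - rsK k lam i)) = r ∧
    (∑ᶠ j : ℕ, (csK k mu j - csK k lam j)) = r

/-- `mu / lam` is a strip (of some rank). -/
def IsStripAny (k : ℕ) (lam mu : ℕ → ℕ) : Prop := ∃ r : ℕ, IsStrip k r lam mu

/-- A maximal strip: it admits no `lam`-augmentation move. -/
def MaximalStrip (k : ℕ) (lam mu : ℕ → ℕ) : Prop :=
  IsStripAny k lam mu ∧ ¬ ∃ nu : ℕ → ℕ, MoveRel k mu nu ∧ IsStripAny k lam nu

/-- A reverse-maximal strip `mu / rho`: there is no move from `rho` to a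
`k`-shape `rho'` with `mu / rho'` again a strip. -/
def ReverseMaximalStrip (k : ℕ) (rho mu : ℕ → ℕ) : Prop :=
  IsStripAny k rho mu ∧ ¬ ∃ rho' : ℕ → ℕ, MoveRel k rho rho' ∧ IsStripAny k rho' mu

/-- Adjoin the cell `a` at the end of its row. -/
def addCell (f : ℕ → ℕ) (a : Cell) : ℕ → ℕ := Function.update f a.1 (f a.1 + 1)

/-- A lower augmentable corner of the strip `mu / lam`: a `mu`-addable corner
`a` whose adjunction expels from the `k`-boundary a cell of `∂mu` in the row of
`a` and in a modified column of the strip. -/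
def LowerAugCorner (k : ℕ) (lam mu : ℕ → ℕ) (a : Cell) : Prop :=
  IsAddableCorner mu a ∧ ∃ b : Cell, b ∈ bdry k mu ∧ b.1 = a.1 ∧
    csK k mu b.2 = csK k lam b.2 + 1 ∧ k < hook (addCell mu a) b

/-- An upper augmentable corner of the strip `mu / lam`: a `mu`-addable corner
`a`, not lying directly on top of a cell of the strip, whose adjunction expels
from the `k`-boundary a cell of `∂mu` in the column of `a` and in a modified
row of the strip. -/
def UpperAugCorner (k : ℕ) (lam mu : ℕ → ℕ) (a : Cell) : Prop :=
  IsAddableCorner mu a ∧ (a.1 = 0 ∨ (a.1 - 1, a.2) ∉ cellsOf mu \ cellsOf lam) ∧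
    ∃ b : Cell, b ∈ bdry k mu ∧ b.2 = a.2 ∧
      rsK k mu b.1 = rsK k lam b.1 + 1 ∧ k < hook (addCell mu a) b

/-! ## Paths in the `k`-shape poset and their equivalence -/

/-- Charge of a step from `f` to `g`: 0 for a row move or an empty move, the
number of cells for a column move. -/
noncomputable def stepCharge (k : ℕ) (f g : ℕ → ℕ) : ℕ :=
  if ∃ m : PreMove k f g, m.IsColMove then (cellsOf g \ cellsOf f).ncard else 0

/-- A path in the `k`-shape poset from `lam` to `nu`, recorded by its list of
vertices; each step is an empty move or a move. -/
def IsPathList (k : ℕ) (lam nu : ℕ → ℕ) (p : List (ℕ → ℕ)) : Prop :=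
  p.head? = some lam ∧ p.getLast? = some nu ∧
    List.Chain' (fun f g => f = g ∨ MoveRel k f g) p

/-- The charge of a path: the sum of the charges of its steps. -/
noncomputable def pathCharge (k : ℕ) (p : List (ℕ → ℕ)) : ℕ :=
  (List.zipWith (stepCharge k) p p.tail).sum

/-- The equivalence on paths generated by diamond equivalences (and by
insertion of empty moves). -/
inductive PathEquiv (k : ℕ) : List (ℕ → ℕ) → List (ℕ → ℕ) → Prop
  | refl (p : List (ℕ → ℕ)) : PathEquiv k p p
  | symm {p q : List (ℕ → ℕ)} : PathEquiv k p q → PathEquiv k q p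
  | trans {p q r : List (ℕ → ℕ)} : PathEquiv k p q → PathEquiv k q r → PathEquiv k p r
  | pad (pre post : List (ℕ → ℕ)) (κ : ℕ → ℕ) :
      PathEquiv k (pre ++ κ :: post) (pre ++ κ :: κ :: post)
  | diamond (pre post : List (ℕ → ℕ)) (κ μ ν γ : ℕ → ℕ)
      (h1 : κ = μ ∨ MoveRel k κ μ) (h2 : μ = γ ∨ MoveRel k μ γ)
      (h3 : κ = ν ∨ MoveRel k κ ν) (h4 : ν = γ ∨ MoveRel k ν γ)
      (hcells : (cellsOf μ \ cellsOf κ) ∪ (cellsOf γ \ cellsOf μ)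
          = (cellsOf ν \ cellsOf κ) ∪ (cellsOf γ \ cellsOf ν))
      (hcharge : stepCharge k κ μ + stepCharge k μ γ = stepCharge k κ ν + stepCharge k ν γ) :
      PathEquiv k (pre ++ κ :: μ :: γ :: post) (pre ++ κ :: ν :: γ :: post)

/-- The type of paths in the `k`-shape poset from `lam` to `nu`. -/
def PathsTo (k : ℕ) (lam nu : ℕ → ℕ) : Type :=
  {p : List (ℕ → ℕ) // IsPathList k lam nu p}

def kPathSetoid (k : ℕ) (lam nu : ℕ → ℕ) : Setoid (PathsTo k lam nu) where
  r p q := PathEquiv k p.1 q.1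
  iseqv := ⟨fun p => PathEquiv.refl p.1, fun h => PathEquiv.symm h,
    fun h h' => PathEquiv.trans h h'⟩

/-- Equivalence classes of paths from `lam` to `nu` in the `k`-shape poset. -/
def Patheq (k : ℕ) (lam nu : ℕ → ℕ) : Type := Quotient (kPathSetoid k lam nu)

/-! ## Tableaux -/

/-- A step of a `k`-shape tableau: a strip of rank strictly less than `k`. -/
def StripStep (k : ℕ) (f g : ℕ → ℕ) : Prop := ∃ r : ℕ, r < k ∧ IsStrip k r f g

/-- A `k`-shape tableau of shape `mu / lam`, recorded by its chain of shapes. -/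
def IsTableau (k : ℕ) (lam mu : ℕ → ℕ) (T : List (ℕ → ℕ)) : Prop :=
  T.head? = some lam ∧ T.getLast? = some mu ∧ List.Chain' (StripStep k) T

/-- A maximal `k`-shape tableau: each of its strips is maximal. -/
def IsMaxTableau (k : ℕ) (lam mu : ℕ → ℕ) (T : List (ℕ → ℕ)) : Prop :=
  IsTableau k lam mu T ∧ List.Chain' (MaximalStrip k) T

/-- A reverse-maximal `k`-shape tableau: each of its strips is reverse-maximal. -/
def IsRevMaxTableau (k : ℕ) (lam mu : ℕ → ℕ) (T : List (ℕ → ℕ)) : Prop :=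
  IsTableau k lam mu T ∧ List.Chain' (ReverseMaximalStrip k) T

/-- The rank of the strip `g / f`. -/
noncomputable def stripRank (k : ℕ) (f g : ℕ → ℕ) : ℕ :=
  ∑ᶠ i : ℕ, (rsK k g i - rsK k f i)

/-- The weight of a tableau: the list of ranks of its strips. -/
noncomputable def tabWeight (k : ℕ) (T : List (ℕ → ℕ)) : List ℕ :=
  List.zipWith (stripRank k) T T.tail

/-- The indent of a cell `b` in the skew shape `mu / lam`: the number of its
cells strictly to the left of `b` in the row of `b`. -/
noncomputable def indent (lam mu : ℕ → ℕ) (b : Cell) : ℕ :=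
  Nat.card {x : Cell // x ∈ cellsOf mu \ cellsOf lam ∧ x.1 = b.1 ∧ x.2 < b.2}

/-- A `lam`-augmentation path from `mu` to `nu`: a path in the `k`-shape poset
all of whose vertices `rho` satisfy that `rho / lam` is a strip. -/
def IsAugPath (k : ℕ) (lam mu nu : ℕ → ℕ) (p : List (ℕ → ℕ)) : Prop :=
  IsPathList k mu nu p ∧ ∀ rho ∈ p, IsStripAny k lam rho
section Aux

lemma conj_lt_iff {f : ℕ → ℕ} (hf : IsPartition f) (i j : ℕ) : i < conj f j ↔ j < f i := by
  obtain ⟨hmono, N, hN⟩ := hf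
  have hne : {i : ℕ | f i ≤ j}.Nonempty := ⟨N, by simp [hN N le_rfl]⟩
  set m := sInf {i : ℕ | f i ≤ j} with hm
  have hmem : f m ≤ j := Nat.sInf_mem hne
  have hset : {i : ℕ | j < f i} = Set.Iio m := by
    ext x
    simp only [Set.mem_setOf_eq, Set.mem_Iio]
    constructor
    · intro hx
      by_contra h
      exact absurd (le_trans (hmono m x (le_of_not_gt h)) hmem) (not_le.2 hx)
    · intro hx
      have := Nat.notMem_of_lt_sInf (by omega : x < sInf {i : ℕ | f i ≤ j})
      simpa using this
  have hcm : conj f j = m := by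
    have he : {i : ℕ // j < f i} ≃ (Set.Iio m : Set ℕ) := Equiv.setCongr hset
    rw [conj, Nat.card_congr he, Nat.card_eq_card_toFinset]
    simp
  rw [hcm]
  have h2 := Set.ext_iff.1 hset i
  simpa [Set.mem_Iio] using h2.symm

lemma conj_eq {f : ℕ → ℕ} (hf : IsPartition f) {m j : ℕ} (h1 : f m ≤ j)
    (h2 : ∀ i, i < m → j < f i) : conj f j = m := by
  have hle : conj f j ≤ m := by
    by_contra h
    exact absurd ((conj_lt_iff hf m j).1 (by omega)) (by omega)
  have hge : m ≤ conj f j := by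
    rcases Nat.eq_zero_or_pos m with h | h
    · omega
    · have := (conj_lt_iff hf (m - 1) j).2 (h2 (m - 1) (by omega))
      omega
  omega

lemma conj_anti {f : ℕ → ℕ} (hf : IsPartition f) {j j' : ℕ} (h : j ≤ j') :
    conj f j' ≤ conj f j := by
  by_contra hc
  have h1 := (conj_lt_iff hf (conj f j) j').1 (by omega)
  have h2 := (conj_lt_iff hf (conj f j) j).2 (by omega)
  omega

lemma hook_int {f : ℕ → ℕ} (hf : IsPartition f) {x : Cell} (hx : x ∈ cellsOf f) :
    (hook f x : ℤ) = (f x.1 : ℤ) + (conj f x.2 : ℤ) - x.2 - x.1 - 1 := by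
  have h1 : x.2 < f x.1 := hx
  have h2 : x.1 < conj f x.2 := (conj_lt_iff hf x.1 x.2).2 h1
  unfold hook
  omega

end Aux

section StringCtx

variable {k : ℕ} {lam mu : ℕ → ℕ} {a : List Cell}

structure SCtx (k : ℕ) (lam mu : ℕ → ℕ) (a : List Cell) : Prop where
  hlam : IsPartition lam
  hmu : IsPartition mu
  hle : ∀ i, lam i ≤ mu i
  hne : a ≠ []
  hcells : cellsOf mu \ cellsOf lam = {x : Cell | x ∈ a}
  hchain : List.Chain' (fun x y : Cell => y.1 < x.1 ∧ Contiguous k x y) a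

lemma SCtx.of_isString (hs : IsString k lam mu a) : SCtx k lam mu a :=
  ⟨hs.1, hs.2.1, hs.2.2.1, hs.2.2.2.1, hs.2.2.2.2.1, hs.2.2.2.2.2⟩

lemma SCtx.mem_iff (ctx : SCtx k lam mu a) (p : Cell) :
    p ∈ a ↔ lam p.1 ≤ p.2 ∧ p.2 < mu p.1 := by
  have := Set.ext_iff.1 ctx.hcells p
  simp only [Set.mem_diff, Set.mem_setOf_eq, cellsOf] at this
  rw [← this]
  omega

lemma SCtx.step (ctx : SCtx k lam mu a) (t : ℕ) (ht : t + 1 < a.length) :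
    (a[t+1]'ht).1 < (a[t]'(by omega)).1 ∧ Contiguous k (a[t]'(by omega)) (a[t+1]'ht) := by
  have h := ctx.hchain
  rw [List.Chain', List.isChain_iff_getElem] at h
  have := h t (by omega)
  simpa [List.get_eq_getElem] using this

lemma SCtx.row_strict (ctx : SCtx k lam mu a) {s t : ℕ} (hst : s < t) (ht : t < a.length) :
    (a[t]'ht).1 < (a[s]'(by omega)).1 := by
  induction t with
  | zero => omega
  | succ n ih =>
    rcases Nat.lt_or_ge s n with h | h
    · exact lt_trans (ctx.step n (by omega)).1 (ih h (by omega))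
    · have hsn : s = n := by omega
      subst hsn
      exact (ctx.step s ht).1

lemma SCtx.row_inj (ctx : SCtx k lam mu a) {s t : ℕ} (hs : s < a.length) (ht : t < a.length)
    (h : (a[s]'hs).1 = (a[t]'ht).1) : s = t := by
  rcases Nat.lt_trichotomy s t with h' | h' | h'
  · exact absurd (ctx.row_strict h' ht) (by omega)
  · exact h'
  · exact absurd (ctx.row_strict h' hs) (by omega)

lemma SCtx.cell_eq (ctx : SCtx k lam mu a) (t : ℕ) (ht : t < a.length) :
    (a[t]'ht).2 = lam (a[t]'ht).1 ∧ mu (a[t]'ht).1 = lam (a[t]'ht).1 + 1 := by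
  set p := a[t]'ht with hp
  have hpa : p ∈ a := by rw [hp]; exact List.getElem_mem ht
  have h1 : lam p.1 ≤ p.2 ∧ p.2 < mu p.1 := (ctx.mem_iff p).1 hpa
  have h2 : mu p.1 ≤ lam p.1 + 1 := by
    by_contra hcon
    have hA : ((p.1, lam p.1) : Cell) ∈ a := (ctx.mem_iff _).2 (by simp; omega)
    have hB : ((p.1, lam p.1 + 1) : Cell) ∈ a := (ctx.mem_iff _).2 (by simp; omega)
    obtain ⟨s1, hs1, he1⟩ := List.mem_iff_getElem.1 hA
    obtain ⟨s2, hs2, he2⟩ := List.mem_iff_getElem.1 hB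
    have : s1 = s2 := ctx.row_inj hs1 hs2 (by rw [he1, he2])
    subst this
    rw [he1] at he2
    have := congrArg Prod.snd he2
    simp at this
  omega

lemma SCtx.mu_eq_of_norow (ctx : SCtx k lam mu a) (i : ℕ)
    (h : ∀ p ∈ a, p.1 ≠ i) : mu i = lam i := by
  by_contra hcon
  have hlt : lam i < mu i := by have := ctx.hle i; omega
  have : ((i, lam i) : Cell) ∈ a := (ctx.mem_iff _).2 (by simp; omega)
  exact h _ this rfl

lemma SCtx.col_strict_succ (ctx : SCtx k lam mu a) (hk : 2 ≤ k) (t : ℕ) (ht : t + 1 < a.length) :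
    (a[t]'(by omega)).2 < (a[t+1]'ht).2 := by
  obtain ⟨hrow, hcont⟩ := ctx.step t ht
  set p := a[t]'(by omega : t < a.length) with hp
  set q := a[t+1]'ht with hq
  have hcp := ctx.cell_eq t (by omega)
  have hcq := ctx.cell_eq (t+1) ht
  rw [← hp] at hcp
  rw [← hq] at hcq
  have hmono := ctx.hlam.1
  have hwk : p.2 ≤ q.2 := by
    rw [hcp.1, hcq.1]
    exact hmono q.1 p.1 (by omega)
  rcases Nat.lt_or_ge p.2 q.2 with h | h
  · exact h
  · exfalso
    have hceq : p.2 = q.2 := by omega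
    -- row gap is k or k+1 ≥ 2
    have hgap : p.1 - q.1 = k ∨ p.1 - q.1 = k + 1 := by
      rcases hcont with h' | h' <;> [left; right] <;>
        · simp only [Contiguous, diagIdx] at h' ⊢
          omega
    -- the row i = p.1 - 1 is not a string row
    have hnostr : ∀ r ∈ a, r.1 ≠ p.1 - 1 := by
      intro r hr hre
      obtain ⟨u, hu, heu⟩ := List.mem_iff_getElem.1 hr
      have heu1 : (a[u]'hu).1 = r.1 := by rw [heu]
      rcases Nat.lt_trichotomy u t with h' | h' | h'
      · have h5 := ctx.row_strict h' (by omega : t < a.length)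
        have e2 : (a[t]'(by omega : t < a.length)).1 = p.1 := by rw [← hp]
        omega
      · subst h'
        have e2 : (a[u]'hu).1 = p.1 := by rw [← hp]
        omega
      · have h'' : t + 1 ≤ u := by omega
        rcases Nat.eq_or_lt_of_le h'' with h3 | h3
        · subst h3
          have e2 : (a[t+1]'hu).1 = q.1 := by rw [← hq]
          omega
        · have h5 := ctx.row_strict (h3 : t + 1 < u) hu
          have e2 : (a[t+1]'(by omega : t + 1 < a.length)).1 = q.1 := by rw [← hq]
          omega
    have hmueq := ctx.mu_eq_of_norow (p.1 - 1) hnostr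
    have h1 : lam (p.1 - 1) ≤ lam q.1 := hmono q.1 (p.1 - 1) (by omega)
    have h2 : mu p.1 ≤ mu (p.1 - 1) := ctx.hmu.1 (p.1 - 1) p.1 (by omega)
    rw [hcp.1] at hceq
    rw [hcq.1] at hceq
    omega

end StringCtx

section StringCtx2

variable {k : ℕ} {lam mu : ℕ → ℕ} {a : List Cell}

lemma SCtx.col_mono (ctx : SCtx k lam mu a) (hk : 2 ≤ k) {s t : ℕ} (hst : s ≤ t)
    (ht : t < a.length) : (a[s]'(by omega)).2 ≤ (a[t]'ht).2 := by
  induction t with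
  | zero =>
    have : s = 0 := by omega
    subst this
    rfl
  | succ n ih =>
    rcases Nat.lt_or_ge s (n + 1) with h | h
    · have h1 := ih (by omega) (by omega)
      have h2 := ctx.col_strict_succ hk n ht
      omega
    · have : s = n + 1 := by omega
      subst this
      rfl

lemma SCtx.col_strict (ctx : SCtx k lam mu a) (hk : 2 ≤ k) {s t : ℕ} (hst : s < t)
    (ht : t < a.length) : (a[s]'(by omega)).2 < (a[t]'ht).2 := by
  induction t with
  | zero => omega
  | succ n ih =>
    have h2 := ctx.col_strict_succ hk n ht
    rcases Nat.lt_or_ge s n with h | h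
    · have h1 := ih h (by omega)
      omega
    · have : s = n := by omega
      subst this
      exact h2

/-- Key corner lemma: every row strictly above the row of a string cell is
strictly longer than that cell's column. -/
lemma SCtx.corner (ctx : SCtx k lam mu a) (hk : 2 ≤ k) (t : ℕ) (ht : t < a.length)
    {i : ℕ} (hi : i < (a[t]'ht).1) : (a[t]'ht).2 < lam i := by
  set p := a[t]'ht with hp
  have hmono := ctx.hlam.1
  have key : p.2 < lam (p.1 - 1) := by
    by_cases hstr : ∃ u, ∃ hu : u < a.length, (a[u]'hu).1 = p.1 - 1
    · obtain ⟨u, hu, heu⟩ := hstr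
      have htu : t < u := by
        rcases Nat.lt_trichotomy t u with h' | h' | h'
        · exact h'
        · exfalso; subst h'; rw [← hp] at heu; omega
        · exfalso
          have h5 := ctx.row_strict h' ht
          rw [← hp] at h5
          omega
      have hcl := ctx.col_strict hk htu hu
      rw [← hp] at hcl
      have hcu := (ctx.cell_eq u hu).1
      rw [← heu]
      omega
    · have hnr : ∀ r ∈ a, r.1 ≠ p.1 - 1 := by
        intro r hr hre
        obtain ⟨u, hu, heu⟩ := List.mem_iff_getElem.1 hr
        exact hstr ⟨u, hu, by rw [heu, hre]⟩
      have hmueq := ctx.mu_eq_of_norow (p.1 - 1) hnr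
      have h2 : mu p.1 ≤ mu (p.1 - 1) := ctx.hmu.1 (p.1 - 1) p.1 (by omega)
      have hce := ctx.cell_eq t ht
      rw [← hp] at hce
      omega
  have : lam (p.1 - 1) ≤ lam i := hmono i (p.1 - 1) (by omega)
  omega

lemma SCtx.conj_lam_col (ctx : SCtx k lam mu a) (hk : 2 ≤ k) (t : ℕ) (ht : t < a.length) :
    conj lam (a[t]'ht).2 = (a[t]'ht).1 := by
  have hce := ctx.cell_eq t ht
  exact conj_eq ctx.hlam (by omega) (fun i hi => ctx.corner hk t ht hi)

lemma SCtx.conj_mu_col (ctx : SCtx k lam mu a) (hk : 2 ≤ k) (t : ℕ) (ht : t < a.length) :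
    conj mu (a[t]'ht).2 = (a[t]'ht).1 + 1 := by
  set p := a[t]'ht with hp
  have hce := ctx.cell_eq t ht
  rw [← hp] at hce
  refine conj_eq ctx.hmu ?_ ?_
  · -- mu (p.1 + 1) ≤ p.2
    by_cases hstr : ∃ u, ∃ hu : u < a.length, (a[u]'hu).1 = p.1 + 1
    · obtain ⟨u, hu, heu⟩ := hstr
      have hut : u < t := by
        rcases Nat.lt_trichotomy u t with h' | h' | h'
        · exact h'
        · exfalso; subst h'; rw [← hp] at heu; omega
        · exfalso
          have h5 := ctx.row_strict h' hu
          rw [← hp] at h5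
          omega
      have hcl := ctx.col_strict hk hut ht
      rw [← hp] at hcl
      have hcu := ctx.cell_eq u hu
      rw [heu] at hcu
      omega
    · have hnr : ∀ r ∈ a, r.1 ≠ p.1 + 1 := by
        intro r hr hre
        obtain ⟨u, hu, heu⟩ := List.mem_iff_getElem.1 hr
        exact hstr ⟨u, hu, by rw [heu, hre]⟩
      have hmueq := ctx.mu_eq_of_norow (p.1 + 1) hnr
      have h2 : lam (p.1 + 1) ≤ lam p.1 := ctx.hlam.1 p.1 (p.1 + 1) (by omega)
      omega
  · intro i hi
    rcases Nat.lt_or_ge i p.1 with h | h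
    · have := ctx.corner hk t ht (hp ▸ h)
      rw [← hp] at this
      have := ctx.hle i
      omega
    · have : i = p.1 := by omega
      subst this
      omega

lemma SCtx.conj_mu_nocol (ctx : SCtx k lam mu a) (j : ℕ)
    (h : ∀ r ∈ a, r.2 ≠ j) : conj mu j = conj lam j := by
  refine conj_eq ctx.hmu ?_ ?_
  · -- mu (conj lam j) ≤ j
    set m := conj lam j with hm
    have h1 : lam m ≤ j := by
      by_contra hcon
      have := (conj_lt_iff ctx.hlam m j).2 (by omega)
      omega
    by_cases hstr : ∃ u, ∃ hu : u < a.length, (a[u]'hu).1 = m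
    · obtain ⟨u, hu, heu⟩ := hstr
      have hce := ctx.cell_eq u hu
      have hne : (a[u]'hu).2 ≠ j := h _ (List.getElem_mem hu)
      rw [heu] at hce
      omega
    · have hnr : ∀ r ∈ a, r.1 ≠ m := by
        intro r hr hre
        obtain ⟨u, hu, heu⟩ := List.mem_iff_getElem.1 hr
        exact hstr ⟨u, hu, by rw [heu, hre]⟩
      have := ctx.mu_eq_of_norow m hnr
      omega
  · intro i hi
    have h1 : j < lam i := (conj_lt_iff ctx.hlam i j).1 hi
    have := ctx.hle i
    omega

lemma SCtx.hook_mu (ctx : SCtx k lam mu a) {x : Cell} (hx : x ∈ cellsOf lam) (er ec : ℕ)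
    (hr : mu x.1 = lam x.1 + er) (hc : conj mu x.2 = conj lam x.2 + ec) :
    (hook mu x : ℤ) = (hook lam x : ℤ) + er + ec := by
  have hxm : x ∈ cellsOf mu := by
    have h1 : x.2 < lam x.1 := hx
    have := ctx.hle x.1
    exact lt_of_lt_of_le h1 this
  rw [hook_int ctx.hmu hxm, hook_int ctx.hlam hx, hr, hc]
  push_cast
  ring

/-- Diagonal gap between consecutive string cells. -/
lemma SCtx.gap (ctx : SCtx k lam mu a) (hk : 2 ≤ k) (t : ℕ) (ht : t + 1 < a.length) :
    ((a[t+1]'ht).2 : ℤ) - (a[t]'(by omega)).2 + (a[t]'(by omega)).1 - (a[t+1]'ht).1 = k ∨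
    ((a[t+1]'ht).2 : ℤ) - (a[t]'(by omega)).2 + (a[t]'(by omega)).1 - (a[t+1]'ht).1 = k + 1 := by
  obtain ⟨hrow, hcont⟩ := ctx.step t ht
  have hcol := ctx.col_strict_succ hk t ht
  simp only [Contiguous, diagIdx] at hcont
  omega

lemma SCtx.gap_ge (ctx : SCtx k lam mu a) (hk : 2 ≤ k) {s t : ℕ} (hst : s ≤ t)
    (ht : t < a.length) :
    ((t : ℤ) - s) * k ≤ ((a[t]'ht).2 : ℤ) - (a[s]'(by omega)).2
      + (a[s]'(by omega)).1 - (a[t]'ht).1 := by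
  induction t with
  | zero =>
    have : s = 0 := by omega
    subst this
    simp
  | succ n ih =>
    rcases Nat.lt_or_ge s (n + 1) with h | h
    · have h1 := ih (by omega) (by omega)
      have h2 := ctx.gap hk n ht
      push_cast
      push_cast at h1
      have e : ((n:ℤ) + 1 - s) * k = ((n:ℤ) - s) * k + k := by ring
      omega
    · have : s = n + 1 := by omega
      subst this
      simp

end StringCtx2

section Conjuncts

variable {k : ℕ} {lam mu : ℕ → ℕ} {a : List Cell}

lemma head?_some {l : List Cell} {x : Cell} (h : l.head? = some x) :
    ∃ hl : 0 < l.length, l[0] = x := by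
  cases l with
  | nil => simp at h
  | cons y t => simp_all

lemma head?_of_ne {l : List Cell} (h : l ≠ []) :
    l.head? = some (l[0]'(List.length_pos_iff.2 h)) := by
  cases l with
  | nil => simp at h
  | cons y t => simp

lemma getLast?_some {l : List Cell} {x : Cell} (h : l.getLast? = some x) :
    ∃ hl : 0 < l.length, l[l.length - 1] = x := by
  have hne : l ≠ [] := by rintro rfl; simp at h
  rw [List.getLast?_eq_getLast hne, List.getLast_eq_getElem hne] at h
  exact ⟨List.length_pos_iff.2 hne, by injection h⟩

lemma getLast?_of_ne {l : List Cell} (h : l ≠ []) :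
    l.getLast? = some (l[l.length - 1]'(by have := List.length_pos_iff.2 h; omega)) := by
  rw [List.getLast?_eq_getLast h, List.getLast_eq_getElem h]

/-- Conjunct 1: the middle cells lie in `∂λ \ ∂μ`. -/
lemma SCtx.middle (ctx : SCtx k lam mu a) (hk : 2 ≤ k) (t : ℕ) (h1 : 1 ≤ t)
    (h2 : t < a.length) :
    (((a[t]'h2).1, (a[t-1]'(by omega)).2) : Cell) ∈ bdry k lam \ bdry k mu := by
  obtain ⟨s, rfl⟩ : ∃ s, t = s + 1 := ⟨t - 1, by omega⟩
  simp only [Nat.add_sub_cancel]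
  set p := a[s+1]'h2 with hp
  set q := a[s]'(by omega : s < a.length) with hq
  have hcp := ctx.cell_eq (s+1) h2
  have hcq := ctx.cell_eq s (by omega)
  rw [← hp] at hcp
  rw [← hq] at hcq
  have hcol := ctx.col_strict_succ hk s h2
  rw [← hp, ← hq] at hcol
  have hgap := ctx.gap hk s h2
  rw [← hp, ← hq] at hgap
  have hbc : ((p.1, q.2) : Cell) ∈ cellsOf lam := by
    show q.2 < lam p.1
    omega
  have hconj : conj lam q.2 = q.1 := by
    have := ctx.conj_lam_col hk s (by omega)
    rw [← hq] at this
    exact this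
  have hconjmu : conj mu q.2 = q.1 + 1 := by
    have := ctx.conj_mu_col hk s (by omega)
    rw [← hq] at this
    exact this
  have hhook : (hook lam ((p.1, q.2) : Cell) : ℤ)
      = (lam p.1 : ℤ) + q.1 - q.2 - p.1 - 1 := by
    rw [hook_int ctx.hlam hbc]
    simp [hconj]
  have hhookmu : (hook mu ((p.1, q.2) : Cell) : ℤ)
      = (hook lam ((p.1, q.2) : Cell) : ℤ) + 1 + 1 := by
    have := ctx.hook_mu hbc 1 1 (by simpa using hcp.2) (by simp [hconj, hconjmu])
    exact_mod_cast this
  constructor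
  · exact ⟨hbc, by omega⟩
  · intro hmem
    have hle : hook mu ((p.1, q.2) : Cell) ≤ k := hmem.2
    omega

/-- Conjunct 2: criterion for `b₀`. -/
lemma SCtx.b0_iff (ctx : SCtx k lam mu a) (hk : 2 ≤ k) (x h : Cell)
    (hh : a.head? = some h) (hx : IsLeftmostBdryInRow k lam h.1 x) :
    x ∈ bdry k lam \ bdry k mu ↔ hook lam x = k := by
  obtain ⟨hl0, hh0⟩ := head?_some hh
  obtain ⟨hxb, hxr, _⟩ := hx
  have hxc : x.2 < lam x.1 := hxb.1
  have hxk : hook lam x ≤ k := hxb.2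
  have hrow0 : h.1 = (a[0]'hl0).1 := by rw [hh0]
  have hc0 := ctx.cell_eq 0 hl0
  have hxr0 : x.1 = (a[0]'hl0).1 := hxr.trans hrow0
  have hlx : lam x.1 = (a[0]'hl0).2 := by rw [hxr0]; exact hc0.1.symm
  have hnc : ∀ r ∈ a, r.2 ≠ x.2 := by
    intro r hr hre
    obtain ⟨u, hu, heu⟩ := List.mem_iff_getElem.1 hr
    have hm := ctx.col_mono hk (by omega : 0 ≤ u) hu
    have : (a[u]'hu).2 = r.2 := by rw [heu]
    omega
  have hr1 : mu x.1 = lam x.1 + 1 := by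
    rw [hxr, hrow0]
    exact hc0.2
  have hc1 : conj mu x.2 = conj lam x.2 + 0 := by
    rw [ctx.conj_mu_nocol x.2 hnc]
    omega
  have hmu := ctx.hook_mu hxb.1 1 0 hr1 hc1
  have hxm : x ∈ cellsOf mu := by
    have := ctx.hle x.1
    exact lt_of_lt_of_le hxc this
  constructor
  · rintro ⟨-, hnb⟩
    have : ¬ (hook mu x ≤ k) := fun hle => hnb ⟨hxm, hle⟩
    omega
  · intro hke
    refine ⟨hxb, fun hmem => ?_⟩
    have := hmem.2
    omega

/-- Conjunct 3: criterion for `b_ℓ`. -/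
lemma SCtx.bl_iff (ctx : SCtx k lam mu a) (hk : 2 ≤ k) (x h : Cell)
    (hh : a.getLast? = some h) (hx : IsBottomBdryInCol k lam h.2 x) :
    x ∈ bdry k lam \ bdry k mu ↔ hook lam x = k := by
  obtain ⟨hl0, hh0⟩ := getLast?_some hh
  set L := a.length - 1 with hL
  obtain ⟨hxb, hxcol, _⟩ := hx
  have hxc : x.2 < lam x.1 := hxb.1
  have hxk : hook lam x ≤ k := hxb.2
  have hcolL : x.2 = (a[L]'(by omega)).2 := by rw [hxcol, ← hh0]
  have hnr : ∀ r ∈ a, r.1 ≠ x.1 := by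
    intro r hr hre
    obtain ⟨u, hu, heu⟩ := List.mem_iff_getElem.1 hr
    have hm := ctx.col_mono hk (by omega : u ≤ L) (by omega : L < a.length)
    have hcu := ctx.cell_eq u hu
    have her : (a[u]'hu).1 = x.1 := by rw [heu, hre]
    have hec : (a[u]'hu).2 = lam x.1 := by rw [← her]; exact hcu.1
    omega
  have hr1 : mu x.1 = lam x.1 + 0 := by
    rw [ctx.mu_eq_of_norow x.1 hnr]
    omega
  have hc1 : conj mu x.2 = conj lam x.2 + 1 := by
    rw [hcolL, ctx.conj_mu_col hk L (by omega), ctx.conj_lam_col hk L (by omega)]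
  have hmu := ctx.hook_mu hxb.1 0 1 hr1 hc1
  have hxm : x ∈ cellsOf mu := by
    have := ctx.hle x.1
    exact lt_of_lt_of_le hxc this
  constructor
  · rintro ⟨-, hnb⟩
    have : ¬ (hook mu x ≤ k) := fun hle => hnb ⟨hxm, hle⟩
    omega
  · intro hke
    refine ⟨hxb, fun hmem => ?_⟩
    have := hmem.2
    omega

end Conjuncts

section Classify

variable {k : ℕ} {lam mu : ℕ → ℕ} {a : List Cell}

lemma SCtx.classify (ctx : SCtx k lam mu a) (hk : 2 ≤ k) (x : Cell)
    (hx : x ∈ bdry k lam \ bdry k mu) :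
    (∃ i : ℕ, 1 ≤ i ∧ i < a.length ∧ ∃ p q : Cell, a[i]? = some p ∧ a[i - 1]? = some q ∧
        x = (p.1, q.2)) ∨
      (∃ h : Cell, a.head? = some h ∧ IsLeftmostBdryInRow k lam h.1 x ∧ hook lam x = k) ∨
      (∃ h : Cell, a.getLast? = some h ∧ IsBottomBdryInCol k lam h.2 x ∧ hook lam x = k) := by
  obtain ⟨hxb, hxnb⟩ := hx
  have hx1 : x.2 < lam x.1 := hxb.1
  have hx2 : hook lam x ≤ k := hxb.2
  have hxm : x ∈ cellsOf mu := lt_of_lt_of_le hx1 (ctx.hle x.1)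
  have hkmu : k < hook mu x := by
    by_contra hcon
    exact hxnb ⟨hxm, by omega⟩
  have hxZ := hook_int ctx.hlam hxb.1
  by_cases hR : ∃ u, ∃ hu : u < a.length, (a[u]'hu).1 = x.1
  · by_cases hC : ∃ u, ∃ hu : u < a.length, (a[u]'hu).2 = x.2
    · -- middle cell
      left
      obtain ⟨t, ht, heq_r⟩ := hR
      obtain ⟨s, hs, heq_c⟩ := hC
      have hct := ctx.cell_eq t ht
      have hlamx : lam x.1 = (a[t]'ht).2 := by rw [← heq_r]; exact hct.1.symm
      have hst : s < t := by
        by_contra hcon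
        have hm := ctx.col_mono hk (by omega : t ≤ s) hs
        omega
      have hconj : conj lam x.2 = (a[s]'hs).1 := by
        rw [← heq_c]; exact ctx.conj_lam_col hk s hs
      have hgapge := ctx.gap_ge hk (le_of_lt hst) ht
      have ht2 : t = s + 1 := by
        by_contra hne
        have h2 : (2:ℤ) ≤ (t:ℤ) - s := by omega
        have hmul : 2 * (k:ℤ) ≤ ((t:ℤ) - s) * k :=
          mul_le_mul_of_nonneg_right h2 (by positivity)
        omega
      subst ht2
      refine ⟨s + 1, by omega, ht, a[s+1]'ht, a[s]'hs, List.getElem?_eq_getElem ht, ?_, ?_⟩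
      · simp only [Nat.add_sub_cancel]
        exact List.getElem?_eq_getElem hs
      · rw [heq_r, heq_c]
    · -- row type: b₀
      right; left
      obtain ⟨t, ht, heq_r⟩ := hR
      have hnc : ∀ r ∈ a, r.2 ≠ x.2 := by
        intro r hr hre
        obtain ⟨u, hu, heu⟩ := List.mem_iff_getElem.1 hr
        exact hC ⟨u, hu, by rw [heu, hre]⟩
      have hct := ctx.cell_eq t ht
      have hlamx : lam x.1 = (a[t]'ht).2 := by rw [← heq_r]; exact hct.1.symm
      have hr1 : mu x.1 = lam x.1 + 1 := by rw [← heq_r]; exact hct.2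
      have hc1 : conj mu x.2 = conj lam x.2 + 0 := by
        rw [ctx.conj_mu_nocol x.2 hnc]
        omega
      have hmuZ := ctx.hook_mu hxb.1 1 0 hr1 hc1
      have hookk : hook lam x = k := by omega
      have ht0 : t = 0 := by
        by_contra hne
        obtain ⟨s, rfl⟩ : ∃ s, t = s + 1 := ⟨t - 1, by omega⟩
        have hgap := ctx.gap hk s ht
        have hcs := ctx.cell_eq s (by omega : s < a.length)
        have hnes : (a[s]'(by omega : s < a.length)).2 ≠ x.2 :=
          hnc _ (List.getElem_mem (by omega))
        rcases lt_or_gt_of_ne hnes with hlt | hgt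
        · have hanti := conj_anti ctx.hlam (le_of_lt hlt)
          have hcls := ctx.conj_lam_col hk s (by omega : s < a.length)
          omega
        · have h2 : (a[s]'(by omega : s < a.length)).1 < conj lam x.2 :=
            (conj_lt_iff ctx.hlam _ _).2 (by omega)
          omega
      subst ht0
      refine ⟨a[0]'ht, head?_of_ne ctx.hne, ⟨hxb, heq_r.symm, ?_⟩, hookk⟩
      intro c hcmem
      by_contra hclt
      have hcc : c < lam ((a[0]'ht).1) := hcmem.1
      have hck : hook lam (((a[0]'ht).1, c) : Cell) ≤ k := hcmem.2
      have hcZ := hook_int ctx.hlam hcmem.1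
      simp only at hcZ
      have hanti : conj lam x.2 ≤ conj lam c := conj_anti ctx.hlam (by omega)
      rw [heq_r] at hcZ hcc hck
      omega
  · by_cases hC : ∃ u, ∃ hu : u < a.length, (a[u]'hu).2 = x.2
    · -- column type: b_ℓ
      right; right
      obtain ⟨s, hs, heq_c⟩ := hC
      have hnr : ∀ r ∈ a, r.1 ≠ x.1 := by
        intro r hr hre
        obtain ⟨u, hu, heu⟩ := List.mem_iff_getElem.1 hr
        exact hR ⟨u, hu, by rw [heu, hre]⟩
      have hr1 : mu x.1 = lam x.1 + 0 := by
        rw [ctx.mu_eq_of_norow x.1 hnr]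
        omega
      have hc1 : conj mu x.2 = conj lam x.2 + 1 := by
        rw [← heq_c, ctx.conj_mu_col hk s hs, ctx.conj_lam_col hk s hs]
      have hmuZ := ctx.hook_mu hxb.1 0 1 hr1 hc1
      have hookk : hook lam x = k := by omega
      have hconjx : conj lam x.2 = (a[s]'hs).1 := by
        rw [← heq_c]; exact ctx.conj_lam_col hk s hs
      have hxrow : x.1 < (a[s]'hs).1 := by
        have := (conj_lt_iff ctx.hlam x.1 x.2).2 hx1
        omega
      have hsl : s = a.length - 1 := by
        by_contra hne
        have hs1 : s + 1 < a.length := by omega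
        have hne_row : (a[s+1]'hs1).1 ≠ x.1 := hnr _ (List.getElem_mem hs1)
        have hgap := ctx.gap hk s hs1
        have hcs1 := ctx.cell_eq (s+1) hs1
        rcases Nat.lt_trichotomy x.1 ((a[s+1]'hs1).1) with hlt | heq | hgt
        · have hcorner := ctx.corner hk (s+1) hs1 hlt
          omega
        · exact hne_row heq.symm
        · have hmon : lam x.1 ≤ lam ((a[s+1]'hs1).1) := ctx.hlam.1 _ _ (by omega)
          omega
      subst hsl
      refine ⟨a[a.length - 1]'(by omega), getLast?_of_ne ctx.hne, ⟨hxb, heq_c.symm, ?_⟩, hookk⟩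
      intro r hrmem
      by_contra hrlt
      have hrc : (a[a.length - 1]'(by omega)).2 < lam r := hrmem.1
      have hrk : hook lam ((r, (a[a.length - 1]'(by omega)).2) : Cell) ≤ k := hrmem.2
      have hrZ := hook_int ctx.hlam hrmem.1
      simp only at hrZ
      have hmon : lam x.1 ≤ lam r := ctx.hlam.1 _ _ (by omega)
      rw [heq_c] at hrZ hrc hrk
      omega
    · -- impossible
      exfalso
      have hnc : ∀ r ∈ a, r.2 ≠ x.2 := by
        intro r hr hre
        obtain ⟨u, hu, heu⟩ := List.mem_iff_getElem.1 hr
        exact hC ⟨u, hu, by rw [heu, hre]⟩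
      have hnr : ∀ r ∈ a, r.1 ≠ x.1 := by
        intro r hr hre
        obtain ⟨u, hu, heu⟩ := List.mem_iff_getElem.1 hr
        exact hR ⟨u, hu, by rw [heu, hre]⟩
      have hr1 : mu x.1 = lam x.1 + 0 := by
        rw [ctx.mu_eq_of_norow x.1 hnr]
        omega
      have hc1 : conj mu x.2 = conj lam x.2 + 0 := by
        rw [ctx.conj_mu_nocol x.2 hnc]
        omega
      have hmuZ := ctx.hook_mu hxb.1 0 0 hr1 hc1
      omega

end Classify

/-- description of `∂λ \ ∂μ` for a string `μ/λ`. -/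
theorem statement_2 (k : ℕ) (hk : 2 ≤ k) (lam mu : ℕ → ℕ) (a : List Cell)
    (hs : IsString k lam mu a) :
    (∀ i : ℕ, 1 ≤ i → i < a.length → ∀ p q : Cell, a[i]? = some p → a[i - 1]? = some q →
      ((p.1, q.2) : Cell) ∈ bdry k lam \ bdry k mu) ∧
    (∀ x h : Cell, a.head? = some h → IsLeftmostBdryInRow k lam h.1 x →
      (x ∈ bdry k lam \ bdry k mu ↔ hook lam x = k)) ∧
    (∀ x h : Cell, a.getLast? = some h → IsBottomBdryInCol k lam h.2 x →
      (x ∈ bdry k lam \ bdry k mu ↔ hook lam x = k)) ∧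
    (∀ x ∈ bdry k lam \ bdry k mu,
      (∃ i : ℕ, 1 ≤ i ∧ i < a.length ∧ ∃ p q : Cell, a[i]? = some p ∧ a[i - 1]? = some q ∧
        x = (p.1, q.2)) ∨
      (∃ h : Cell, a.head? = some h ∧ IsLeftmostBdryInRow k lam h.1 x ∧ hook lam x = k) ∨
      (∃ h : Cell, a.getLast? = some h ∧ IsBottomBdryInCol k lam h.2 x ∧ hook lam x = k)) := by
  have ctx := SCtx.of_isString hs
  refine ⟨?_, ?_, ?_, ?_⟩
  · intro i h1 h2 p q hp hq
    rw [List.getElem?_eq_getElem h2] at hp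
    rw [List.getElem?_eq_getElem (show i - 1 < a.length by omega)] at hq
    injection hp with hp
    injection hq with hq
    rw [← hp, ← hq]
    exact ctx.middle hk i h1 h2
  · intro x h hh hx
    exact ctx.b0_iff hk x h hh hx
  · intro x h hh hx
    exact ctx.bl_iff hk x h hh hx
  · intro x hx
    exact ctx.classify hk x hx
end

section
/- Let λ ⊆ μ be k-shapes such that S = μ/λ is a horizontal strip, and let c be a column containing a cell of S. Then cs(μ)_c ≥ cs(λ)_c. -/
open scoped Classical

/-- For a partition `f`, column `c` is occupied in row `i` iff `i < conj f c`. -/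
lemma conj_spec (f : ℕ → ℕ) (hf : IsPartition f) (c : ℕ) :
    ∀ i : ℕ, c < f i ↔ i < conj f c := by
  obtain ⟨hmono, N, hN⟩ := hf
  have hex : ∃ n, f n ≤ c := ⟨N, by simp [hN N le_rfl]⟩
  set m := Nat.find hex with hm
  have key : ∀ i, c < f i ↔ i < m := by
    intro i
    constructor
    · intro h
      by_contra hlt
      push_neg at hlt
      have : f i ≤ f m := hmono m i hlt
      have : f m ≤ c := Nat.find_spec hex
      omega
    · intro h
      have := Nat.find_min hex h
      omega
  have : conj f c = m := by
    rw [conj]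
    have e1 : {i : ℕ // c < f i} ≃ {i : ℕ // i < m} :=
      Equiv.subtypeEquivRight key
    rw [Nat.card_congr e1, Nat.card_congr (Fin.equivSubtype).symm]
    simp
  intro i
  rw [this]; exact key i

/-- if `μ/λ` is a horizontal strip of `k`-shapes and column `c`
contains a cell of `μ/λ`, then `cs(μ)_c ≥ cs(λ)_c`. -/
theorem statement_11 (k : ℕ) (hk : 2 ≤ k) (lam mu : ℕ → ℕ)
    (hl : IsKShape k lam) (hm : IsKShape k mu) (hsub : ∀ i, lam i ≤ mu i)
    (hhs : OneCellPerCol lam mu) (c : ℕ) (hc : ∃ i : ℕ, lam i ≤ c ∧ c < mu i) :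
    csK k lam c ≤ csK k mu c := by
  obtain ⟨hlp, -, -⟩ := hl
  obtain ⟨hmp, -, -⟩ := hm
  have hlc := conj_spec lam hlp c
  have hmc := conj_spec mu hmp c
  set ml := conj lam c with hml
  set mm := conj mu c with hmm
  obtain ⟨i₀, hi₀l, hi₀m⟩ := hc
  have hi₀lt : i₀ < mm := (hmc i₀).1 hi₀m
  have hi₀ge : ml ≤ i₀ := by
    by_contra h
    push_neg at h
    exact absurd ((hlc i₀).2 h) (by omega)
  -- conj mu c = conj lam c + 1
  have hconj : mm = ml + 1 := by
    have hx : ((ml, c) : Cell) ∈ cellsOf mu \ cellsOf lam := by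
      constructor
      · exact (hmc ml).2 (by omega)
      · intro h
        exact absurd ((hlc ml).1 h) (by omega)
    have hy : ((mm - 1, c) : Cell) ∈ cellsOf mu \ cellsOf lam := by
      constructor
      · exact (hmc (mm - 1)).2 (by omega)
      · intro h
        have := (hlc (mm - 1)).1 h
        -- mm - 1 < ml ≤ i₀ < mm, and also ml ≤ mm - 1? derive contradiction
        have hml1 : mm - 1 < ml := this
        omega
    have := hhs _ _ hx hy rfl
    have h1 : ml = mm - 1 := congrArg Prod.fst this
    omega
  -- horizontal strip: mu (i+1) ≤ lam i
  have hstrip : ∀ i : ℕ, mu (i + 1) ≤ lam i := by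
    intro i
    by_contra h
    push_neg at h
    have hx : ((i + 1, lam i) : Cell) ∈ cellsOf mu \ cellsOf lam := by
      constructor
      · exact h
      · intro hcell
        have : lam (i + 1) ≤ lam i := hlp.1 i (i + 1) (by omega)
        simp only [cellsOf, Set.mem_setOf_eq] at hcell
        omega
    have hy : ((i, lam i) : Cell) ∈ cellsOf mu \ cellsOf lam := by
      constructor
      · have : mu (i + 1) ≤ mu i := hmp.1 i (i + 1) (by omega)
        simp only [cellsOf, Set.mem_setOf_eq]
        omega
      · simp [cellsOf]
    have := hhs _ _ hx hy rfl
    have : i + 1 = i := congrArg Prod.fst this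
    omega
  -- membership characterizations
  have hbdry : ∀ (f : ℕ → ℕ) (i : ℕ), ((i, c) : Cell) ∈ bdry k f ↔ c < f i ∧ hook f (i, c) ≤ k := by
    intro f i
    simp [bdry, cellsOf]
  -- the injection i ↦ i+1
  have hmap : ∀ i : ℕ, ((i, c) : Cell) ∈ bdry k lam → ((i + 1, c) : Cell) ∈ bdry k mu := by
    intro i hi
    rw [hbdry] at hi ⊢
    obtain ⟨hic, hih⟩ := hi
    have hilt : i < ml := (hlc i).1 hic
    refine ⟨(hmc (i + 1)).2 (by omega), ?_⟩
    have h1 : mu (i + 1) ≤ lam i := hstrip i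
    simp only [hook] at hih ⊢
    rw [← hml] at hih
    rw [← hmm, hconj]
    omega
  -- finiteness of the target
  have hfin : ∀ i : ℕ, ((i, c) : Cell) ∈ bdry k mu → i < mm := by
    intro i hi
    rw [hbdry] at hi
    exact (hmc i).1 hi.1
  haveI : Finite {i : ℕ // ((i, c) : Cell) ∈ bdry k mu} :=
    Finite.of_injective (fun x => (⟨x.1, hfin x.1 x.2⟩ : Fin mm))
      (fun a b h => Subtype.ext (by simpa using congrArg Fin.val h))
  -- conclude
  rw [csK, csK]
  exact Nat.card_le_card_of_injective
    (fun x : {i : ℕ // ((i, c) : Cell) ∈ bdry k lam} =>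
      (⟨x.1 + 1, hmap x.1 x.2⟩ : {i : ℕ // ((i, c) : Cell) ∈ bdry k mu}))
    (fun a b h => Subtype.ext (by simpa using congrArg Subtype.val h))
end
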